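/- arXiv:1910.12334 — 2 statements merged into one kernel-verified Lean document; each statement's English description precedes it below -/
import Mathlib

section
/- Let 1 → Γ' → Γ → Γ'' be an exact sequence of groups (i.e., Γ' is a normal subgroup of Γ with Γ/Γ' embedding into Γ''). If Γ'' has bounded finite subgroups (there is a constant B such that every finite subgroup of Γ'' has order at most B), then Γ is Jordan if and only if Γ' is Jordan. -/
/-- A group is Jordan if there is a constant `J` such that every finite subgroup
contains a normal abelian subgroup of index at most `J`. -/
def JordanGroup (G : Type*) [Group G] : Prop :=
  ∃ J : ℕ, ∀ H : Subgroup G, Finite H →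
    ∃ A : Subgroup H, A.Normal ∧ IsMulCommutative A ∧ A.index ≤ J

/-- A group has bounded finite subgroups if the orders of its finite subgroups
are bounded by a constant. -/
def HasBoundedFiniteSubgroups (G : Type*) [Group G] : Prop :=
  ∃ B : ℕ, ∀ H : Subgroup G, Finite H → Nat.card H ≤ B

-- key transfer lemma
lemma key_transfer {G G' : Type*} [Group G] [Group G'] (ψ : G →* G')
    (hψ : Function.Injective ψ) [Finite G] {J : ℕ}
    (hJ : ∀ H : Subgroup G', Finite H →
      ∃ A : Subgroup H, A.Normal ∧ IsMulCommutative A ∧ A.index ≤ J) :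
    ∃ A : Subgroup G, A.Normal ∧ IsMulCommutative A ∧ A.index ≤ J := by
  have hfin : Finite ψ.range := Set.finite_range ψ |>.to_subtype
  obtain ⟨A', hN, hC, hI⟩ := hJ ψ.range hfin
  let e : G ≃* ψ.range := MonoidHom.ofInjective hψ
  refine ⟨A'.comap e.toMonoidHom, hN.comap _, ?_, ?_⟩
  · haveI := hC; exact A'.comap_injective_isMulCommutative e.injective
  · exact (Subgroup.index_comap_of_surjective A' e.surjective).le.trans hI

open Nat in
lemma core_bound {H : Type*} [Group H] [Finite H] (M : Subgroup H)
    (hM : IsMulCommutative M) :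
    ∃ C : Subgroup H, C.Normal ∧ IsMulCommutative C ∧ C.index ≤ (M.index)! := by
  refine ⟨M.normalCore, M.normalCore_normal, ?_, ?_⟩
  · exact ⟨⟨fun a b => Subtype.ext
      (Subgroup.mul_comm_of_mem_isMulCommutative M
        (M.normalCore_le a.2) (M.normalCore_le b.2))⟩⟩
  · have h1 : M.normalCore.index = Nat.card (MulAction.toPermHom H (H ⧸ M)).range := by
      rw [Subgroup.normalCore_eq_ker, Subgroup.index_ker]
    rw [h1]
    have : Nat.card (MulAction.toPermHom H (H ⧸ M)).range ≤ Nat.card (Equiv.Perm (H ⧸ M)) :=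
      Nat.card_le_card_of_injective _ Subtype.coe_injective
    refine this.trans ?_
    have : Nat.card (Equiv.Perm (H ⧸ M)) = (Nat.card (H ⧸ M))! := by
      have : Fintype (H ⧸ M) := Fintype.ofFinite _
      have : DecidableEq (H ⧸ M) := Classical.decEq _
      rw [Nat.card_eq_fintype_card, Nat.card_eq_fintype_card, Fintype.card_perm]
    rw [this, Subgroup.index_eq_card]

/-- If `1 → Γ' → Γ → Γ''` is an exact sequence of groups and `Γ''` has bounded
finite subgroups, then `Γ` is Jordan iff `Γ'` is Jordan. -/
theorem stmt_0 {Γ' Γ Γ'' : Type*} [Group Γ'] [Group Γ] [Group Γ'']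
    (f : Γ' →* Γ) (g : Γ →* Γ'')
    (hf : Function.Injective f) (hexact : g.ker = f.range)
    (hbfs : HasBoundedFiniteSubgroups Γ'') :
    JordanGroup Γ ↔ JordanGroup Γ' := by
  constructor
  · rintro ⟨J, hJ⟩
    refine ⟨J, fun H hH => ?_⟩
    exact key_transfer (f.comp H.subtype)
      (hf.comp H.subtype_injective) hJ
  · rintro ⟨J, hJ⟩
    obtain ⟨B, hB⟩ := hbfs
    refine ⟨Nat.factorial (J * B), fun H hH => ?_⟩
    set φ : H →* Γ'' := g.comp H.subtype with hφ
    set K : Subgroup H := φ.ker with hK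
    have hKindex : K.index ≤ B := by
      rw [hK, Subgroup.index_ker]
      exact hB φ.range (Set.finite_range φ).to_subtype
    -- build injective hom K →* Γ'
    have hmem : ∀ k : K, (H.subtype.comp K.subtype) k ∈ f.range := by
      intro k
      rw [← hexact]
      exact k.2
    let χ : K →* f.range := (H.subtype.comp K.subtype).codRestrict f.range hmem
    let ψ : K →* Γ' := (MonoidHom.ofInjective hf).symm.toMonoidHom.comp χ
    have hψ : Function.Injective ψ := by
      apply Function.Injective.comp (MonoidHom.ofInjective hf).symm.injective
      intro a b hab
      have h2 := congrArg Subtype.val hab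
      exact Subtype.ext (Subtype.ext h2)
    obtain ⟨A, hAN, hAC, hAI⟩ := key_transfer ψ hψ hJ
    haveI := hAC
    set M : Subgroup H := A.map K.subtype with hM
    have hMC : IsMulCommutative M := Subgroup.map_isMulCommutative A K.subtype
    have hMI : M.index ≤ J * B := by
      rw [hM, Subgroup.index_map_subtype]
      exact Nat.mul_le_mul hAI hKindex
    obtain ⟨C, hCN, hCC, hCI⟩ := core_bound M hMC
    exact ⟨C, hCN, hCC, hCI.trans (Nat.factorial_le hMI)⟩
end

section
/- Let Γ be a group admitting a homomorphism φ: Γ → Δ to a finite group Δ whose kernel is Jordan. Then Γ is Jordan. -/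
/-- The index of the normal core is at most the factorial of the index. -/
lemma normalCore_index_le_factorial {G : Type*} [Group G] (H : Subgroup G)
    [Finite (G ⧸ H)] : H.normalCore.index ≤ (H.index).factorial := by
  rw [Subgroup.normalCore_eq_ker, Subgroup.index_ker]
  have : Fintype (G ⧸ H) := Fintype.ofFinite _
  calc Nat.card (MulAction.toPermHom G (G ⧸ H)).range
      ≤ Nat.card (Equiv.Perm (G ⧸ H)) := Subgroup.card_le_card_group _
    _ = (Nat.card (G ⧸ H)).factorial := by
        haveI : DecidableEq (G ⧸ H) := Classical.decEq _
        rw [Nat.card_eq_fintype_card (α := Equiv.Perm (G ⧸ H)),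
          Nat.card_eq_fintype_card (α := G ⧸ H)]
        exact Fintype.card_perm
    _ = (H.index).factorial := by rw [Subgroup.index_eq_card]

/-- If a group `Γ` admits a homomorphism to a finite group whose kernel is
Jordan, then `Γ` is Jordan. -/
theorem stmt_5 {Γ Δ : Type*} [Group Γ] [Group Δ] [Finite Δ]
    (φ : Γ →* Δ) (hker : JordanGroup φ.ker) : JordanGroup Γ := by
  obtain ⟨J, hJ⟩ := hker
  refine ⟨(J * Nat.card Δ).factorial, fun H hH => ?_⟩
  set ψ : H →* Δ := φ.comp H.subtype with hψ
  set K : Subgroup H := ψ.ker with hK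
  have hKle : K.map H.subtype ≤ φ.ker := by
    rintro x ⟨y, hy, rfl⟩
    exact hy
  set L : Subgroup φ.ker := (K.map H.subtype).subgroupOf φ.ker with hL
  have hLK : Nat.card L = Nat.card K := by
    have e1 : L ≃* K.map H.subtype := Subgroup.subgroupOfEquivOfLe hKle
    have e2 : K ≃* K.map H.subtype :=
      K.equivMapOfInjective H.subtype (Subgroup.subtype_injective H)
    exact Nat.card_congr (e1.toEquiv.trans e2.toEquiv.symm)
  have hKfin : Finite K := Subtype.finite
  have hLfin : Finite L := by
    have : Nat.card K ≠ 0 := Nat.card_pos.ne'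
    exact Nat.finite_of_card_ne_zero (hLK ▸ this)
  obtain ⟨A, hAnorm, hAcomm, hAidx⟩ := hJ L hLfin
  haveI := hAcomm
  set Ag : Subgroup Γ := (A.map L.subtype).map φ.ker.subtype with hAg
  haveI hAgcomm : IsMulCommutative Ag := by
    rw [hAg]; infer_instance
  have hAgle : Ag ≤ H := by
    have h2 : Ag ≤ K.map H.subtype := by
      calc Ag ≤ L.map φ.ker.subtype :=
            Subgroup.map_mono (Subgroup.map_subtype_le A)
        _ = K.map H.subtype ⊓ φ.ker := Subgroup.subgroupOf_map_subtype _ _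
        _ ≤ K.map H.subtype := inf_le_left
    exact h2.trans (Subgroup.map_subtype_le K)
  set A' : Subgroup H := Ag.subgroupOf H with hA'
  have hcardA' : Nat.card A' = Nat.card A := by
    have e1 : A' ≃* Ag := Subgroup.subgroupOfEquivOfLe hAgle
    have e2 : (A.map L.subtype) ≃* Ag :=
      (A.map L.subtype).equivMapOfInjective φ.ker.subtype
        (Subgroup.subtype_injective _)
    have e3 : A ≃* A.map L.subtype :=
      A.equivMapOfInjective L.subtype (Subgroup.subtype_injective _)
    exact Nat.card_congr (e1.toEquiv.trans (e2.toEquiv.symm.trans e3.toEquiv.symm))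
  haveI hA'comm : IsMulCommutative A' := by
    rw [hA']; infer_instance
  -- index computation
  have h1 : Nat.card A * A'.index = Nat.card H := by
    rw [← hcardA']; exact A'.card_mul_index
  have h3 : Nat.card A * A.index = Nat.card K := by
    rw [← hLK]; exact A.card_mul_index
  have h2 : Nat.card K * K.index = Nat.card H := K.card_mul_index
  have hApos : 0 < Nat.card A := Nat.card_pos
  have hidx : A'.index = A.index * K.index := by
    have : Nat.card A * A'.index = Nat.card A * (A.index * K.index) := by
      rw [h1, ← mul_assoc, h3, h2]
    exact Nat.eq_of_mul_eq_mul_left hApos this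
  have hKidx : K.index ≤ Nat.card Δ := by
    rw [hK, Subgroup.index_ker]
    exact Subgroup.card_le_card_group _
  have hA'idx : A'.index ≤ J * Nat.card Δ := by
    rw [hidx]
    exact Nat.mul_le_mul hAidx hKidx
  refine ⟨A'.normalCore, inferInstance, ?_, ?_⟩
  · exact ⟨⟨fun a b => Subtype.ext (Subgroup.mul_comm_of_mem_isMulCommutative A'
      (A'.normalCore_le a.2) (A'.normalCore_le b.2))⟩⟩
  · calc A'.normalCore.index ≤ (A'.index).factorial :=
          normalCore_index_le_factorial A'
      _ ≤ (J * Nat.card Δ).factorial := Nat.factorial_le hA'idx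
end
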